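/- In a closed walk, the multiset of non-returned edges (last occurrences of odd edges) forms an even subgraph: every vertex is incident to an even number of non-returned edges, i.e., each vertex appears an even number of times as an endpoint of a non-returned edge (counted with multiplicity). -/
import Mathlib


open Finset Classical
noncomputable section
open scoped Classical

lemma aux_even {α : Type*} (n : ℕ) (e : ℕ → α) (w : α → ℕ)
    (hw : Even (∑ j ∈ Finset.range n, w (e j))) :
    Even (∑ j ∈ (Finset.range n).filter (fun j =>
        Odd ((Finset.range n).filter (fun j' => e j' = e j)).card ∧
        ∀ j' ∈ Finset.range n, e j' = e j → j' ≤ j), w (e j)) := by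
  classical
  set R := Finset.range n with hR
  set P : ℕ → Prop := fun j =>
    Odd ((R.filter (fun j' => e j' = e j)).card) ∧
      ∀ j' ∈ R, e j' = e j → j' ≤ j with hP
  -- the fibers of the complement all have even cardinality
  have hcard : ∀ a : α,
      Even (((R.filter fun j => ¬ P j).filter fun j => e j = a).card) := by
    intro a
    set T := R.filter (fun j => e j = a) with hT
    have hPiff : ∀ j ∈ R, e j = a →
        (P j ↔ (Odd T.card ∧ ∀ j' ∈ T, j' ≤ j)) := by
      intro j hj ha
      have hTeq : R.filter (fun j' => e j' = e j) = T := by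
        rw [hT, ha]
      constructor
      · rintro ⟨h1, h2⟩
        refine ⟨hTeq ▸ h1, ?_⟩
        intro j' hj'
        rw [hT, Finset.mem_filter] at hj'
        exact h2 j' hj'.1 (hj'.2.trans ha.symm)
      · rintro ⟨h1, h2⟩
        refine ⟨hTeq ▸ h1, ?_⟩
        intro j' hj' hj'e
        exact h2 j' (by rw [hT, Finset.mem_filter]; exact ⟨hj', hj'e.trans ha⟩)
    have hset : (R.filter fun j => ¬ P j).filter (fun j => e j = a)
        = T.filter (fun j => ¬ (Odd T.card ∧ ∀ j' ∈ T, j' ≤ j)) := by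
      ext j
      simp only [Finset.mem_filter, hT]
      constructor
      · rintro ⟨⟨hj, hnp⟩, ha⟩
        exact ⟨⟨hj, ha⟩, fun hq => hnp ((hPiff j hj ha).mpr (by
          simpa [hT] using hq))⟩
      · rintro ⟨⟨hj, ha⟩, hq⟩
        refine ⟨⟨hj, fun hp => hq ?_⟩, ha⟩
        simpa [hT] using (hPiff j hj ha).mp hp
    rw [hset]
    rcases Nat.even_or_odd T.card with hc | hc
    · have : T.filter (fun j => ¬ (Odd T.card ∧ ∀ j' ∈ T, j' ≤ j)) = T := by
        apply Finset.filter_true_of_mem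
        intro j hj hq
        exact (Nat.not_odd_iff_even.mpr hc) hq.1
      rw [this]; exact hc
    · have hne : T.Nonempty := by
        rw [← Finset.card_pos]
        rcases hc with ⟨k, hk⟩; omega
      set m := T.max' hne with hm
      have hfq : T.filter (fun j => (Odd T.card ∧ ∀ j' ∈ T, j' ≤ j)) = {m} := by
        ext j
        simp only [Finset.mem_filter, Finset.mem_singleton]
        constructor
        · rintro ⟨hjT, _, hub⟩
          exact le_antisymm (Finset.le_max' T j hjT) (hub m (T.max'_mem hne))
        · rintro rfl
          exact ⟨T.max'_mem hne, hc, fun j' hj' => Finset.le_max' T j' hj'⟩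
      have : T.filter (fun j => ¬ (Odd T.card ∧ ∀ j' ∈ T, j' ≤ j))
          = T.erase m := by
        rw [Finset.filter_not, hfq, Finset.sdiff_singleton_eq_erase]
      rw [this, Finset.card_erase_of_mem (T.max'_mem hne)]
      exact Nat.Odd.sub_odd hc odd_one
  -- hence the complement sum is even
  have hCsum : Even (∑ j ∈ R.filter (fun j => ¬ P j), w (e j)) := by
    rw [Finset.sum_comp]
    rw [even_iff_two_dvd]
    apply Finset.dvd_sum
    intro a _
    rw [smul_eq_mul]
    exact Dvd.dvd.mul_right ((even_iff_two_dvd).mp (hcard a)) _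
  have hsplit := Finset.sum_filter_add_sum_filter_not R P (fun j => w (e j))
  rw [← hsplit] at hw
  exact (Nat.even_add.mp hw).mpr hCsum

/-- In a closed walk `i 0 → i 1 → ... → i (2*s) = i 0` on `Fin N`, call step `j`
(for `j < 2*s`) *non-returned* if the non-oriented edge `s(i j, i (j+1))` appears an odd
number of times in the walk and `j` is the last occurrence of this edge. Then every
vertex `v` is an endpoint of an even number of non-returned edges, counted with
multiplicity (a loop at `v` counts twice). -/
theorem nonreturned_edges_form_even_subgraph (N s : ℕ) (i : ℕ → Fin N)
    (hclosed : i (2 * s) = i 0) (v : Fin N) :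
    Even (∑ j ∈ (Finset.range (2 * s)).filter (fun j =>
        Odd ((Finset.range (2 * s)).filter
          (fun j' => s(i j', i (j' + 1)) = s(i j, i (j + 1)))).card ∧
        ∀ j' ∈ Finset.range (2 * s),
          s(i j', i (j' + 1)) = s(i j, i (j + 1)) → j' ≤ j),
      ((if i j = v then 1 else 0) + (if i (j + 1) = v then 1 else 0))) := by
  classical
  set w : Sym2 (Fin N) → ℕ := fun a =>
    Sym2.lift ⟨fun x y => (if x = v then 1 else 0) + (if y = v then 1 else 0),
      fun x y => by dsimp; ring⟩ a with hwdef
  have hwk : ∀ j : ℕ, w s(i j, i (j + 1))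
      = (if i j = v then 1 else 0) + (if i (j + 1) = v then 1 else 0) := by
    intro j; simp [hwdef]
  have htot : Even (∑ j ∈ Finset.range (2 * s), w s(i j, i (j + 1))) := by
    have h1 : ∑ j ∈ Finset.range (2 * s), w s(i j, i (j + 1))
        = (∑ j ∈ Finset.range (2 * s), (if i j = v then (1 : ℕ) else 0))
          + ∑ j ∈ Finset.range (2 * s), (if i (j + 1) = v then (1 : ℕ) else 0) := by
      rw [← Finset.sum_add_distrib]
      exact Finset.sum_congr rfl fun j _ => hwk j
    have key : (∑ j ∈ Finset.range (2 * s), (if i (j + 1) = v then (1 : ℕ) else 0))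
          + (if i 0 = v then 1 else 0)
        = (∑ j ∈ Finset.range (2 * s), (if i j = v then (1 : ℕ) else 0))
          + (if i (2 * s) = v then 1 else 0) := by
      rw [← Finset.sum_range_succ' (fun j => if i j = v then (1 : ℕ) else 0) (2 * s),
        Finset.sum_range_succ]
    rw [hclosed] at key
    have h2 := Nat.add_right_cancel key
    rw [h1, h2]
    exact Even.add_self _
  have := aux_even (2 * s) (fun j => s(i j, i (j + 1))) w htot
  have h := this
  simp only [hwk] at h
  convert h using 2
  congr!
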